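/- Let A be a set and k a natural number. Then every antichain in Add(A,1) all of whose elements have domain of cardinality exactly k is finite. -/

import Mathlib

/-- A condition in the forcing `Add(A,1)`: a partial function from `A` to `{0,1}` (represented
as `Bool`) with finite domain. -/
def Cond (A : Type*) : Type _ := {p : A → Option Bool // {a | p a ≠ none}.Finite}

/-- The domain of a condition. -/
def Cond.dom {A : Type*} (p : Cond A) : Set A := {a | p.1 a ≠ none}

/-- `q` extends `p` iff `p ⊆ q` as partial functions (reverse inclusion order). -/
def Cond.Extends {A : Type*} (q p : Cond A) : Prop :=
  ∀ a b, p.1 a = some b → q.1 a = some b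

/-- Two conditions are compatible iff they agree on the intersection of their domains
(equivalently, their union is again a partial function). -/
def Cond.Compatible {A : Type*} (p q : Cond A) : Prop :=
  ∀ a x y, p.1 a = some x → q.1 a = some y → x = y

open Classical in
/-- Remove a point from the domain of a condition. -/
noncomputable def Cond.restrict {A : Type*} (a : A) (q : Cond A) : Cond A :=
  ⟨fun c => if c = a then none else q.1 c, by
    apply q.2.subset
    intro c hc
    simp only [Set.mem_setOf_eq] at hc ⊢
    intro h
    apply hc
    split <;> simp [h]⟩

lemma Cond.restrict_dom {A : Type*} (a : A) (q : Cond A) :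
    (Cond.restrict a q).dom = q.dom \ {a} := by
  ext c
  simp only [Cond.dom, Cond.restrict, Set.mem_setOf_eq, Set.mem_diff, Set.mem_singleton_iff]
  by_cases h : c = a <;> simp [h]

lemma antichain_aux {A : Type*} : ∀ (k : ℕ) (C : Set (Cond A)),
    (∀ p ∈ C, ∀ q ∈ C, p ≠ q → ¬ Cond.Compatible p q) →
    (∀ p ∈ C, p.dom.ncard = k) → C.Finite := by
  intro k
  induction k with
  | zero =>
    intro C hanti hdom
    apply Set.Subsingleton.finite
    intro p hp q hq
    have hpd : p.dom = ∅ := by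
      exact (Set.ncard_eq_zero p.2).mp (hdom p hp)
    have hall : ∀ a, p.1 a = none := by
      intro a
      by_contra h
      have : a ∈ p.dom := h
      rw [hpd] at this
      exact this
    by_contra hne
    apply hanti p hp q hq hne
    intro a x y hx hy
    rw [hall a] at hx
    exact absurd hx (by simp)
  | succ k ih =>
    intro C hanti hdom
    by_contra hinf
    replace hinf : C.Infinite := hinf
    obtain ⟨p0, hp0⟩ := hinf.nonempty
    set S : A → Bool → Set (Cond A) := fun a b => {q ∈ C | q.1 a = some b ∧ p0.1 a ≠ some b}
      with hS
    have hsub : C ⊆ {p0} ∪ ⋃ a ∈ p0.dom, ⋃ b, S a b := by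
      intro q hq
      by_cases hqe : q = p0
      · exact Or.inl hqe
      · right
        have := hanti p0 hp0 q hq (Ne.symm hqe)
        rw [Cond.Compatible] at this
        push_neg at this
        obtain ⟨a, x, y, hx, hy, hxy⟩ := this
        refine Set.mem_biUnion (show a ∈ p0.dom by simp [Cond.dom, hx]) ?_
        refine Set.mem_iUnion.2 ⟨y, hq, hy, ?_⟩
        rw [hx]
        simp [hxy]
    have hex : ∃ a ∈ p0.dom, ∃ b, (S a b).Infinite := by
      by_contra h
      push_neg at h
      have hfin : ({p0} ∪ ⋃ a ∈ p0.dom, ⋃ b, S a b : Set (Cond A)).Finite :=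
        (Set.finite_singleton _).union (Set.Finite.biUnion p0.2
          (fun a ha => Set.finite_iUnion (h a ha)))
      exact hinf (hfin.subset hsub)
    obtain ⟨a, ha, b, hSinf⟩ := hex
    -- restrict everything in S a b
    have hmem : ∀ q ∈ S a b, q ∈ C ∧ q.1 a = some b := fun q hq => ⟨hq.1, hq.2.1⟩
    have hdomS : ∀ q ∈ S a b, a ∈ q.dom := by
      intro q hq
      simp [Cond.dom, (hmem q hq).2]
    set r : Cond A → Cond A := Cond.restrict a with hr
    have hinjOn : Set.InjOn r (S a b) := by
      intro q1 h1 q2 h2 heq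
      apply Subtype.ext
      funext c
      by_cases hc : c = a
      · rw [hc, (hmem q1 h1).2, (hmem q2 h2).2]
      · have := congrArg (fun p => p.1 c) heq
        simpa [hr, Cond.restrict, hc] using this
    have hfin' : (r '' (S a b)).Finite := by
      apply ih
      · rintro _ ⟨q1, h1, rfl⟩ _ ⟨q2, h2, rfl⟩ hne hcompat
        have hq12 : q1 ≠ q2 := by rintro rfl; exact hne rfl
        apply hanti q1 (hmem q1 h1).1 q2 (hmem q2 h2).1 hq12
        intro c x y hx hy
        by_cases hc : c = a
        · rw [hc, (hmem q1 h1).2] at hx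
          rw [hc, (hmem q2 h2).2] at hy
          rw [← Option.some_inj, ← hx, ← hy]
        · exact hcompat c x y (by simpa [hr, Cond.restrict, hc] using hx)
            (by simpa [hr, Cond.restrict, hc] using hy)
      · rintro _ ⟨q, hq, rfl⟩
        rw [hr, Cond.restrict_dom, Set.ncard_diff_singleton_of_mem (hdomS q hq),
          hdom q (hmem q hq).1]
        simp
    exact hSinf (hfin'.of_finite_image hinjOn)

/-- Every antichain in `Add(A,1)` all of whose elements have domain of cardinality exactly `k`
is finite. -/
theorem antichain_of_fixed_domain_size_finite {A : Type*} (k : ℕ) (C : Set (Cond A))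
    (hanti : ∀ p ∈ C, ∀ q ∈ C, p ≠ q → ¬ Cond.Compatible p q)
    (hdom : ∀ p ∈ C, p.dom.ncard = k) :
    C.Finite := antichain_aux k C hanti hdom
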